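/- arXiv:1609.03624 — 4 statements merged into one kernel-verified Lean document; each statement's English description precedes it below -/
import Mathlib

section
/- Let R be a reduced root system in a real vector space V with the Aut(R)-invariant inner product normalized so that short roots in each irreducible component have square-length 1. Then there is a unique R-linear map φ: V* → V such that φ(α∨) = α for all coroots α∨ that are short (in the dual root system R∨). -/
open Module

/-- A reduced root system `R` in a real vector space `V`, together with the
`Aut(R)`-invariant inner products on `V` and on `V* = Dual ℝ V`. -/
structure RootSystemData (V : Type) [AddCommGroup V] [Module ℝ V] : Type where
  /-- the (finite) set of roots -/
  roots : Finset V
  /-- the coroot `α∨ ∈ V*` attached to a root `α` -/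
  coroot : V → Module.Dual ℝ V
  span_eq_top : Submodule.span ℝ (roots : Set V) = ⊤
  root_ne_zero : ∀ α ∈ roots, α ≠ (0 : V)
  coroot_self : ∀ α ∈ roots, coroot α α = 2
  reflect_mem : ∀ α ∈ roots, ∀ β ∈ roots, β - coroot α β • α ∈ roots
  crystallographic : ∀ α ∈ roots, ∀ β ∈ roots, ∃ n : ℤ, coroot α β = (n : ℝ)
  reduced : ∀ α ∈ roots, ∀ t : ℝ, t • α ∈ roots → t = 1 ∨ t = -1
  /-- the `Aut(R)`-invariant inner product on `V` -/
  B : V →ₗ[ℝ] V →ₗ[ℝ] ℝ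
  B_symm : ∀ x y, B x y = B y x
  B_pos : ∀ x, x ≠ 0 → 0 < B x x
  B_invariant : ∀ σ : V ≃ₗ[ℝ] V, (∀ α ∈ roots, σ α ∈ roots) →
    ∀ α ∈ roots, ∀ β ∈ roots, B (σ α) (σ β) = B α β
  coroot_eq : ∀ α ∈ roots, ∀ x : V, coroot α x = 2 * B α x / B α α
  /-- the `Aut(R)`-invariant inner product on `V*` (for the dual root system `R∨`) -/
  Bd : Module.Dual ℝ V →ₗ[ℝ] Module.Dual ℝ V →ₗ[ℝ] ℝ
  Bd_symm : ∀ x y, Bd x y = Bd y x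
  Bd_pos : ∀ x, x ≠ 0 → 0 < Bd x x
  /-- the coroot of `α∨` in the dual root system `R∨` is evaluation at `α` -/
  dual_coroot_eq : ∀ α ∈ roots, ∀ y : Module.Dual ℝ V,
    y α = 2 * Bd (coroot α) y / Bd (coroot α) (coroot α)

namespace RootSystemData

variable {V : Type} [AddCommGroup V] [Module ℝ V] (D : RootSystemData V)

/-- `x` and `y` lie in the same irreducible component of the root system. -/
def SameComponent (x y : V) : Prop :=
  Relation.ReflTransGen (fun a b => a ∈ D.roots ∧ b ∈ D.roots ∧ D.B a b ≠ 0) x y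

/-- `R` is irreducible. -/
def IsIrreducible : Prop :=
  D.roots.Nonempty ∧ ∀ α ∈ D.roots, ∀ β ∈ D.roots, D.SameComponent α β

/-- `R` is simply laced: all roots have the same length. -/
def IsSimplyLaced : Prop := ∀ α ∈ D.roots, ∀ β ∈ D.roots, D.B α α = D.B β β

/-- `α` is a root that is short within its irreducible component. -/
def ShortRoot (α : V) : Prop :=
  α ∈ D.roots ∧ ∀ β ∈ D.roots, D.SameComponent α β → D.B α α ≤ D.B β β

/-- `α∨` is a coroot that is short within its irreducible component of `R∨`
(equivalently, `α` is a long root of its component). -/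
def ShortCoroot (α : V) : Prop :=
  α ∈ D.roots ∧ ∀ β ∈ D.roots, D.SameComponent α β →
    D.Bd (D.coroot α) (D.coroot α) ≤ D.Bd (D.coroot β) (D.coroot β)

/-- normalization: short roots in every irreducible component have square-length `1`. -/
def NormalizedPrimal : Prop := ∀ α, D.ShortRoot α → D.B α α = 1

/-- normalization: short coroots in every irreducible component have square-length `1`. -/
def NormalizedDual : Prop := ∀ α, D.ShortCoroot α → D.Bd (D.coroot α) (D.coroot α) = 1

/-- the weight lattice `Λ_w ⊆ V`. -/
def weightLattice : Set V := {x | ∀ α ∈ D.roots, ∃ n : ℤ, D.coroot α x = (n : ℝ)}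

/-- the root lattice `Λ_r ⊆ V`. -/
def rootLattice : AddSubgroup V := AddSubgroup.closure (D.roots : Set V)

/-- the coweight lattice `Λ_w∨ ⊆ V*`. -/
def coweightLattice : Set (Module.Dual ℝ V) := {x | ∀ α ∈ D.roots, ∃ n : ℤ, x α = (n : ℝ)}

/-- the coroot lattice `Λ_r∨ ⊆ V*`. -/
def corootLattice : AddSubgroup (Module.Dual ℝ V) :=
  AddSubgroup.closure (D.coroot '' (D.roots : Set V))

end RootSystemData


namespace RootSystemData

variable {V : Type} [AddCommGroup V] [Module ℝ V] (D : RootSystemData V)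

lemma B_self_pos {α : V} (hα : α ∈ D.roots) : 0 < D.B α α :=
  D.B_pos α (D.root_ne_zero α hα)

lemma coroot_ne_zero' {α : V} (hα : α ∈ D.roots) : D.coroot α ≠ 0 := by
  intro h
  have h2 := D.coroot_self α hα
  rw [h] at h2
  simp at h2

lemma Bd_self_pos {α : V} (hα : α ∈ D.roots) :
    0 < D.Bd (D.coroot α) (D.coroot α) :=
  D.Bd_pos _ (D.coroot_ne_zero' hα)

lemma sameComponent_symm {x y : V} (h : D.SameComponent x y) : D.SameComponent y x :=
  (@Relation.ReflTransGen.symmetric _ _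
    ⟨fun _ _ hab => ⟨hab.2.1, hab.1, by rw [D.B_symm]; exact hab.2.2⟩⟩).symm _ _ h

lemma sameComponent_trans {x y z : V} (h1 : D.SameComponent x y)
    (h2 : D.SameComponent y z) : D.SameComponent x z :=
  Relation.ReflTransGen.trans h1 h2

lemma Bd_coroot_step {α β : V} (hα : α ∈ D.roots) (hβ : β ∈ D.roots)
    (hne : D.B α β ≠ 0) :
    D.Bd (D.coroot α) (D.coroot α) * D.B α α
      = D.Bd (D.coroot β) (D.coroot β) * D.B β β := by
  have h1 := D.dual_coroot_eq α hα (D.coroot β)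
  have h2 := D.coroot_eq β hβ α
  have h3 := D.dual_coroot_eq β hβ (D.coroot α)
  have h4 := D.coroot_eq α hα β
  have ha : (0:ℝ) < D.Bd (D.coroot α) (D.coroot α) := D.Bd_self_pos hα
  have hb : (0:ℝ) < D.Bd (D.coroot β) (D.coroot β) := D.Bd_self_pos hβ
  have hp : (0:ℝ) < D.B α α := D.B_self_pos hα
  have hq : (0:ℝ) < D.B β β := D.B_self_pos hβ
  have hd1 : D.coroot β α * D.Bd (D.coroot α) (D.coroot α)
      = 2 * D.Bd (D.coroot α) (D.coroot β) := by
    rw [h1]; field_simp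
  have hd2 : D.coroot α β * D.Bd (D.coroot β) (D.coroot β)
      = 2 * D.Bd (D.coroot β) (D.coroot α) := by
    rw [h3]; field_simp
  have e1 : D.coroot β α * D.Bd (D.coroot α) (D.coroot α)
      = D.coroot α β * D.Bd (D.coroot β) (D.coroot β) := by
    rw [hd1, hd2, D.Bd_symm]
  have hc1 : D.coroot α β * D.B α α = 2 * D.B α β := by rw [h4]; field_simp
  have hc2 : D.coroot β α * D.B β β = 2 * D.B β α := by rw [h2]; field_simp
  have e2 : D.coroot α β * D.B α α = D.coroot β α * D.B β β := by
    rw [hc1, hc2, D.B_symm]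
  have hcne : D.coroot α β ≠ 0 := by
    intro h0
    rw [h0] at hc1
    simp at hc1
    exact hne hc1
  have hcne2 : D.coroot β α ≠ 0 := by
    intro h0
    rw [h0] at hc2
    simp at hc2
    exact hne (by rw [D.B_symm]; exact hc2)
  have key : (D.coroot β α * D.coroot α β) * (D.Bd (D.coroot α) (D.coroot α) * D.B α α)
      = (D.coroot β α * D.coroot α β) * (D.Bd (D.coroot β) (D.coroot β) * D.B β β) := by
    linear_combination (D.coroot α β * D.B α α) * e1
      + (D.coroot α β * D.Bd (D.coroot β) (D.coroot β)) * e2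
  exact mul_left_cancel₀ (mul_ne_zero hcne2 hcne) key

lemma Bd_coroot_component {α β : V} (h : D.SameComponent α β) :
    D.Bd (D.coroot α) (D.coroot α) * D.B α α
      = D.Bd (D.coroot β) (D.coroot β) * D.B β β := by
  induction h with
  | refl => rfl
  | tail _ hbc ih => exact ih.trans (D.Bd_coroot_step hbc.1 hbc.2.1 hbc.2.2)

/-- the reflection attached to a root -/
noncomputable def refl' {δ : V} (hδ : δ ∈ D.roots) : V ≃ₗ[ℝ] V :=
  Module.reflection (D.coroot_self δ hδ)

lemma refl'_apply {δ : V} (hδ : δ ∈ D.roots) (x : V) :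
    D.refl' hδ x = x - D.coroot δ x • δ :=
  Module.reflection_apply x (D.coroot_self δ hδ)

lemma refl'_refl' {δ : V} (hδ : δ ∈ D.roots) (x : V) :
    D.refl' hδ (D.refl' hδ x) = x :=
  Module.involutive_reflection (D.coroot_self δ hδ) x

lemma refl'_mem {δ : V} (hδ : δ ∈ D.roots) {β : V} (hβ : β ∈ D.roots) :
    D.refl' hδ β ∈ D.roots := by
  rw [D.refl'_apply hδ]
  exact D.reflect_mem δ hδ β hβ

lemma B_refl' {δ : V} (hδ : δ ∈ D.roots) (u v : V) :
    D.B (D.refl' hδ u) (D.refl' hδ v) = D.B u v := by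
  have key : (D.B.compl₁₂ (D.refl' hδ).toLinearMap (D.refl' hδ).toLinearMap) = D.B := by
    apply LinearMap.ext_on D.span_eq_top
    intro α hα
    apply LinearMap.ext_on D.span_eq_top
    intro β hβ
    simpa using D.B_invariant (D.refl' hδ) (fun γ hγ => D.refl'_mem hδ hγ) α hα β hβ
  calc D.B (D.refl' hδ u) (D.refl' hδ v)
      = (D.B.compl₁₂ (D.refl' hδ).toLinearMap (D.refl' hδ).toLinearMap) u v := rfl
    _ = D.B u v := by rw [key]

lemma coroot_refl' {δ : V} (hδ : δ ∈ D.roots) {β : V} (hβ : β ∈ D.roots) (x : V) :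
    D.coroot (D.refl' hδ β) x = D.coroot β (D.refl' hδ x) := by
  have hm : D.refl' hδ β ∈ D.roots := D.refl'_mem hδ hβ
  rw [D.coroot_eq _ hm x, D.coroot_eq β hβ (D.refl' hδ x)]
  have h1 : D.B (D.refl' hδ β) (D.refl' hδ β) = D.B β β := D.B_refl' hδ β β
  have h2 : D.B (D.refl' hδ β) x = D.B β (D.refl' hδ x) := by
    conv_lhs => rw [← D.refl'_refl' hδ x]
    exact D.B_refl' hδ β (D.refl' hδ x)
  rw [h1, h2]

lemma refl'_sameComponent {δ : V} (hδ : δ ∈ D.roots) {β : V} (hβ : β ∈ D.roots) :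
    D.SameComponent β (D.refl' hδ β) := by
  by_cases h : D.B δ β = 0
  · have hc : D.coroot δ β = 0 := by
      rw [D.coroot_eq δ hδ β, h]; simp
    rw [D.refl'_apply hδ, hc, zero_smul, sub_zero]
    exact Relation.ReflTransGen.refl
  · have hm : D.refl' hδ β ∈ D.roots := D.refl'_mem hδ hβ
    have hc : D.coroot δ β = 2 * D.B δ β / D.B δ δ := D.coroot_eq δ hδ β
    have hB2 : D.B δ (D.refl' hδ β) ≠ 0 := by
      rw [D.refl'_apply hδ]
      have : D.B δ (β - D.coroot δ β • δ) = D.B δ β - D.coroot δ β * D.B δ δ := by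
        simp [map_sub, map_smul, smul_eq_mul]
      rw [this, hc]
      have hδδ : D.B δ δ ≠ 0 := (D.B_self_pos hδ).ne'
      field_simp
      intro h0
      exact h (by linarith)
    refine Relation.ReflTransGen.head ⟨hβ, hδ, ?_⟩ (Relation.ReflTransGen.single ⟨hδ, hm, hB2⟩)
    rw [D.B_symm]; exact h

lemma refl'_shortCoroot {δ : V} (hδ : δ ∈ D.roots) {β : V} (hs : D.ShortCoroot β) :
    D.ShortCoroot (D.refl' hδ β) := by
  obtain ⟨hβ, hmin⟩ := hs
  have hm : D.refl' hδ β ∈ D.roots := D.refl'_mem hδ hβ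
  have hsc : D.SameComponent β (D.refl' hδ β) := D.refl'_sameComponent hδ hβ
  have hBd : D.Bd (D.coroot (D.refl' hδ β)) (D.coroot (D.refl' hδ β))
      = D.Bd (D.coroot β) (D.coroot β) := by
    have h1 := D.Bd_coroot_component (D.sameComponent_symm hsc)
    rw [D.B_refl' hδ β β] at h1
    exact mul_right_cancel₀ (D.B_self_pos hβ).ne' h1
  refine ⟨hm, fun γ hγ hc => ?_⟩
  rw [hBd]
  exact hmin γ hγ (D.sameComponent_trans hsc hc)

lemma exists_shortCoroot_sameComponent {γ : V} (hγ : γ ∈ D.roots) :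
    ∃ β, D.ShortCoroot β ∧ D.SameComponent γ β := by
  classical
  set T := D.roots.filter (fun δ => D.SameComponent γ δ) with hT
  have hne : T.Nonempty := ⟨γ, by
    rw [hT, Finset.mem_filter]
    exact ⟨hγ, Relation.ReflTransGen.refl⟩⟩
  obtain ⟨β, hβT, hmax⟩ := T.exists_max_image (fun δ => D.B δ δ) hne
  rw [hT, Finset.mem_filter] at hβT
  refine ⟨β, ⟨hβT.1, fun ζ hζ hcc => ?_⟩, hβT.2⟩
  have hζT : ζ ∈ T := by
    rw [hT, Finset.mem_filter]
    exact ⟨hζ, D.sameComponent_trans hβT.2 hcc⟩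
  have hle : D.B ζ ζ ≤ D.B β β := hmax ζ hζT
  have heq := D.Bd_coroot_component hcc
  nlinarith [D.Bd_self_pos hβT.1, D.Bd_self_pos hζ, D.B_self_pos hζ, D.B_self_pos hβT.1]

lemma U_step {x : V} (hx : ∀ α, D.ShortCoroot α → D.coroot α x = 0)
    {δ : V} (hδ : δ ∈ D.roots) (hne : D.coroot δ x ≠ 0) :
    ∀ α, D.ShortCoroot α → D.coroot α δ = 0 := by
  intro β hβ
  have h1 : D.coroot β (D.refl' hδ x) = 0 := by
    rw [← D.coroot_refl' hδ hβ.1 x]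
    exact hx _ (D.refl'_shortCoroot hδ hβ)
  rw [D.refl'_apply hδ] at h1
  have h2 : D.coroot β x - D.coroot δ x * D.coroot β δ = 0 := by
    simpa [map_sub, map_smul, smul_eq_mul] using h1
  rw [hx β hβ] at h2
  have h3 : D.coroot δ x * D.coroot β δ = 0 := by linarith
  exact (mul_eq_zero.mp h3).resolve_left hne

lemma U_prop {γ β : V} (hγ : ∀ α, D.ShortCoroot α → D.coroot α γ = 0)
    (h : D.SameComponent γ β) : ∀ α, D.ShortCoroot α → D.coroot α β = 0 := by
  induction h with
  | refl => exact hγ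
  | @tail b c _ hbc ih =>
      apply D.U_step ih hbc.2.1
      rw [D.coroot_eq c hbc.2.1 b]
      have hcb : D.B c b ≠ 0 := by rw [D.B_symm]; exact hbc.2.2
      exact div_ne_zero (mul_ne_zero two_ne_zero hcb) (D.B_self_pos hbc.2.1).ne'

lemma span_shortCoroot [FiniteDimensional ℝ V] :
    Submodule.span ℝ {y : Module.Dual ℝ V | ∃ α, D.ShortCoroot α ∧ D.coroot α = y} = ⊤ := by
  apply Submodule.span_eq_top_of_ne_zero
  intro z hz
  by_contra hcon
  push_neg at hcon
  have hU : ∀ α, D.ShortCoroot α → D.coroot α z = 0 := fun α hα => hcon _ ⟨α, hα, rfl⟩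
  obtain ⟨γ, hγroot, hγne⟩ : ∃ γ ∈ D.roots, D.coroot γ z ≠ 0 := by
    by_contra hz2
    push_neg at hz2
    have hBz : ∀ γ ∈ (D.roots : Set V), D.B.flip z γ = (0 : Module.Dual ℝ V) γ := by
      intro γ hγ
      have hco := D.coroot_eq γ hγ z
      rw [hz2 γ hγ] at hco
      have hγγ : D.B γ γ ≠ 0 := (D.B_self_pos hγ).ne'
      have : D.B γ z = 0 := by
        field_simp at hco
        linarith
      simpa [LinearMap.flip_apply, D.B_symm z γ] using this
    have hflip : D.B.flip z = 0 := LinearMap.ext_on D.span_eq_top hBz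
    have hzz : D.B z z = 0 := by
      have := DFunLike.congr_fun hflip z
      simpa [LinearMap.flip_apply] using this
    apply hz
    by_contra hz0
    exact (D.B_pos z hz0).ne' hzz
  have hγU : ∀ α, D.ShortCoroot α → D.coroot α γ = 0 := D.U_step hU hγroot hγne
  obtain ⟨β, hβSC, hβcomp⟩ := D.exists_shortCoroot_sameComponent hγroot
  have hββ := D.U_prop hγU hβcomp β hβSC
  rw [D.coroot_self β hβSC.1] at hββ
  norm_num at hββ

end RootSystemData

/-- For a reduced root system `R` in `V` with the normalized
`Aut(R)`-invariant inner products, there is a unique `ℝ`-linear map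
`φ : V* → V` with `φ(α∨) = α` for all short coroots `α∨`. -/
theorem stmt0 {V : Type} [AddCommGroup V] [Module ℝ V] [FiniteDimensional ℝ V]
    (D : RootSystemData V)
    (hnormV : D.NormalizedPrimal) (hnormVd : D.NormalizedDual) :
    ∃! φ : Module.Dual ℝ V →ₗ[ℝ] V,
      ∀ α, D.ShortCoroot α → φ (D.coroot α) = α := by
  classical
  have hspan := D.span_shortCoroot
  set φ : Module.Dual ℝ V →ₗ[ℝ] V :=
    (Module.evalEquiv ℝ V).symm.toLinearMap ∘ₗ ((2 : ℝ) • D.Bd) with hφdef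
  have hφ : ∀ α, D.ShortCoroot α → φ (D.coroot α) = α := by
    intro α hα
    have h1 : ((2:ℝ) • D.Bd) (D.coroot α) = Module.Dual.eval ℝ V α := by
      ext z
      have hd := D.dual_coroot_eq α hα.1 z
      rw [hnormVd α hα] at hd
      simp only [LinearMap.smul_apply, smul_eq_mul, Module.Dual.eval_apply]
      rw [hd]
      ring
    show (Module.evalEquiv ℝ V).symm (((2:ℝ) • D.Bd) (D.coroot α)) = α
    rw [h1, ← Module.evalEquiv_apply, LinearEquiv.symm_apply_apply]
  refine ⟨φ, hφ, fun ψ hψ => ?_⟩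
  apply LinearMap.ext_on hspan
  rintro y ⟨α, hα, rfl⟩
  rw [hψ α hα, hφ α hα]
end

section
/- For a simple coroot α∨ with corresponding fundamental dominant weight f_α∨ of the dual root system R∨, the map φ satisfies φ(f_α∨) = d_α · f_α, where f_α is the fundamental weight of R corresponding to α and d_α is the square-length of α∨. -/
open Module
open scoped Classical

/-- For a simple root `α` with fundamental weight `f_α` of `R` and
fundamental dominant weight `f_α∨` of `R∨`, the map `φ` satisfies
`φ(f_α∨) = d_α • f_α`, where `d_α` is the square-length of `α∨`. -/
theorem stmt5 {V : Type} [AddCommGroup V] [Module ℝ V] [FiniteDimensional ℝ V]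
    (D : RootSystemData V)
    (hnormV : D.NormalizedPrimal) (hnormVd : D.NormalizedDual)
    (φ : Module.Dual ℝ V →ₗ[ℝ] V)
    (hφ : ∀ x y : Module.Dual ℝ V, x (φ y) = 2 * D.Bd x y)
    -- a system of simple roots `Π`
    (Pi : Finset V) (hPi : ∀ α ∈ Pi, α ∈ D.roots)
    (hlin : LinearIndependent ℝ (fun a : {x // x ∈ Pi} => (a : V)))
    (hspan : Submodule.span ℝ (Pi : Set V) = ⊤)
    -- the fundamental weights of `R`: `⟨f_α, β∨⟩ = δ_{αβ}` for simple roots `β`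
    (fw : V → V)
    (hfw : ∀ α ∈ Pi, ∀ β ∈ Pi, D.coroot β (fw α) = if α = β then 1 else 0)
    -- the fundamental weights of `R∨`: `⟨f_α∨, β⟩ = δ_{αβ}` for simple roots `β`
    (fcw : V → Module.Dual ℝ V)
    (hfcw : ∀ α ∈ Pi, ∀ β ∈ Pi, fcw α β = if α = β then 1 else 0) :
    ∀ α ∈ Pi, φ (fcw α) = D.Bd (D.coroot α) (D.coroot α) • fw α := by
  intro α hα
  have hαR := hPi α hα
  -- B : V →ₗ Dual is bijective
  have hBinj : Function.Injective D.B := by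
    rw [← LinearMap.ker_eq_bot]
    rw [LinearMap.ker_eq_bot']
    intro x hx
    by_contra hx0
    have := D.B_pos x hx0
    rw [show D.B x = 0 from hx] at this
    simp at this
  have hBsurj : Function.Surjective D.B :=
    (LinearMap.injective_iff_surjective_of_finrank_eq_finrank
      (Subspace.dual_finrank_eq (K := ℝ) (V := V)).symm).mp hBinj
  -- coroots of Pi span the dual
  have hBne : ∀ β ∈ Pi, D.B β β ≠ 0 := fun β hβ =>
    ne_of_gt (D.B_pos β (D.root_ne_zero β (hPi β hβ)))
  have hspanc : Submodule.span ℝ (D.coroot '' (Pi : Set V)) = ⊤ := by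
    rw [eq_top_iff]
    have h1 : Submodule.map D.B (Submodule.span ℝ (Pi : Set V)) ≤
        Submodule.span ℝ (D.coroot '' (Pi : Set V)) := by
      rw [Submodule.map_span, Submodule.span_le]
      rintro _ ⟨β, hβ, rfl⟩
      have hc : D.coroot β = (2 / D.B β β) • D.B β := by
        ext x
        simp [D.coroot_eq β (hPi β hβ) x]
        ring
      have : D.B β = (D.B β β / 2) • D.coroot β := by
        rw [hc, smul_smul]
        field_simp [hBne β hβ]
        rw [one_smul]
      rw [this]
      exact Submodule.smul_mem _ _ (Submodule.subset_span ⟨β, hβ, rfl⟩)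
    rw [hspan, Submodule.map_top, LinearMap.range_eq_top.mpr hBsurj] at h1
    exact h1
  -- the vanishing on the difference
  set d := D.Bd (D.coroot α) (D.coroot α) with hd
  set x := φ (fcw α) - d • fw α with hx
  have key : ∀ f : Module.Dual ℝ V, f x = 0 := by
    intro f
    have hf : f ∈ Submodule.span ℝ (D.coroot '' (Pi : Set V)) := by
      rw [hspanc]; trivial
    induction hf using Submodule.span_induction with
    | mem f hf =>
      obtain ⟨β, hβ, rfl⟩ := hf
      have hβR := hPi β hβ
      have hcne : D.Bd (D.coroot β) (D.coroot β) ≠ 0 := by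
        refine ne_of_gt (D.Bd_pos _ ?_)
        intro h
        have := D.coroot_self β hβR
        rw [h] at this
        simp at this
      have h1 : D.coroot β (φ (fcw α)) =
          D.Bd (D.coroot β) (D.coroot β) * fcw α β := by
        rw [hφ, D.dual_coroot_eq β hβR (fcw α)]
        field_simp
      have h2 := hfcw α hα β hβ
      have h3 := hfw α hα β hβ
      rw [hx]
      simp only [map_sub, map_smul, smul_eq_mul, h1, h2, h3]
      by_cases hab : α = β
      · subst hab; simp [hd]
      · simp [hab]
    | zero => simp
    | add f g _ _ hf hg => simp [hf, hg]
    | smul c f _ hf => simp [hf]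
  have : x = 0 := (Module.forall_dual_apply_eq_zero_iff ℝ x).mp key
  rw [hx, sub_eq_zero] at this
  exact this
end

section
/- For the root system R of type B_n with n ≥ 2, the induced map ρ: Λ_w∨/Λ_r∨ → Λ_w/Λ_r is zero. -/
open Module

/-- The Cartan matrix of type `B_n` (Bourbaki numbering, 0-indexed):
entry `(i, j)` is `⟨α_i, α_j∨⟩`; the last simple root `α_{n-1}` is short and
`⟨α_{n-2}, α_{n-1}∨⟩ = -2`. -/
def cartanB (n : ℕ) (i j : Fin n) : ℤ :=
  if i = j then 2
  else if i.val + 1 = j.val ∨ j.val + 1 = i.val then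
    (if i.val + 2 = n ∧ j.val + 1 = n then -2 else -1)
  else 0

def cartanN (n i j : ℕ) : ℤ :=
  if i = j then 2
  else if i + 1 = j ∨ j + 1 = i then
    (if i + 2 = n ∧ j + 1 = n then -2 else -1)
  else 0

lemma cartanB_eq (n : ℕ) (i j : Fin n) : cartanB n i j = cartanN n i.val j.val := by
  simp only [cartanB, cartanN, Fin.ext_iff]

lemma cartanN_decomp (n i j : ℕ) :
    cartanN n i j = 2 * (if i = j then 1 else 0)
      - (if j + 1 = n then 2 else 1) * (if i + 1 = j then 1 else 0)
      - (if i = j + 1 then 1 else 0) := by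
  unfold cartanN; split_ifs <;> omega

lemma colsum {R : Type*} [CommRing R] (n j : ℕ) (hj : j < n) (f : ℕ → R) :
    ∑ i ∈ Finset.range n, f i * ((cartanN n i j : ℤ) : R)
      = 2 * f j - (if j = 0 then 0 else (if j + 1 = n then 2 else 1) * f (j - 1))
        - (if j + 1 = n then 0 else f (j + 1)) := by
  have hpt : ∀ i, f i * ((cartanN n i j : ℤ) : R)
      = (if i = j then 2 * f i else 0)
        - (if i + 1 = j then (if j + 1 = n then 2 else 1) * f i else 0)
        - (if i = j + 1 then f i else 0) := by
    intro i
    rw [cartanN_decomp]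
    push_cast
    split_ifs <;> ring
  rw [Finset.sum_congr rfl fun i _ => hpt i]
  rw [Finset.sum_sub_distrib, Finset.sum_sub_distrib]
  congr 1
  · congr 1
    · rw [Finset.sum_ite_eq' (Finset.range n) j (fun i => 2 * f i), if_pos (Finset.mem_range.2 hj)]
    · rcases Nat.eq_zero_or_pos j with h0 | h0
      · subst h0
        simp
      · have hcond : ∀ i, (i + 1 = j) ↔ (i = j - 1) := fun i => by omega
        simp only [hcond]
        rw [Finset.sum_ite_eq' (Finset.range n) (j - 1)
            (fun i => (if j + 1 = n then 2 else 1) * f i),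
          if_pos (Finset.mem_range.2 (by omega)), if_neg (show ¬ j = 0 by omega)]
  · rw [Finset.sum_ite_eq' (Finset.range n) (j + 1) f]
    by_cases h : j + 1 = n
    · rw [if_pos h, if_neg (by simp only [Finset.mem_range]; omega)]
    · rw [if_neg h, if_pos (Finset.mem_range.2 (by omega))]

lemma abel_sum (v u : ℕ → ℤ) (h0 : u 0 = v 0) (hs : ∀ k, u (k + 1) = v (k + 1) - v k) :
    ∀ m : ℕ, ∑ j ∈ Finset.range (m + 1), v j * (u j - u (j + 1))
      = ∑ k ∈ Finset.range (m + 1), (u k) ^ 2 - v m * u (m + 1) := by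
  intro m
  induction m with
  | zero => simp [h0, hs 0]; ring
  | succ m ih =>
      rw [Finset.sum_range_succ, ih, Finset.sum_range_succ (fun k => u k ^ 2) (m + 1)]
      linear_combination (-(u (m + 1))) * hs m



lemma bigq (n : ℕ) (u : ℕ → ℤ) (q : ℤ) (hq : q = ∑ k ∈ Finset.range n, u k ^ 2)
    (hdvd : ∀ k < n, q ∣ 2 * u k) (h3 : 3 ≤ q) :
    ∃ k, k < n ∧ (u k = 2 ∨ u k = -2) ∧ (∀ i < n, i ≠ k → u i = 0) := by
  have hterm : ∀ k < n, u k ^ 2 ≤ q := by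
    intro k hk
    rw [hq]
    exact Finset.single_le_sum (fun i _ => sq_nonneg (u i)) (Finset.mem_range.2 hk)
  have hval : ∀ k, k < n → u k ≠ 0 → ((u k = 2 ∨ u k = -2) ∧ q = 4) := by
    intro k hk hne
    have h1 : q ≤ |2 * u k| := Int.le_of_dvd (abs_pos.2 (by omega)) ((dvd_abs _ _).2 (hdvd k hk))
    have h2 : |2 * u k| = 2 * |u k| := by rw [abs_mul]; simp
    have h4 : |u k| ^ 2 = u k ^ 2 := sq_abs (u k)
    have h5 : u k ^ 2 ≤ q := hterm k hk
    have ha : |u k| = 2 := by nlinarith [abs_nonneg (u k)]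
    constructor
    · rcases abs_eq (by norm_num : (0:ℤ) ≤ 2) |>.1 ha with h | h
      · exact Or.inl h
      · exact Or.inr h
    · nlinarith
  have hex : ∃ k, k < n ∧ u k ≠ 0 := by
    by_contra hc
    push_neg at hc
    have : q = 0 := by
      rw [hq]
      exact Finset.sum_eq_zero fun i hi => by
        rw [hc i (Finset.mem_range.1 hi)]; ring
    omega
  obtain ⟨k, hk, hne⟩ := hex
  obtain ⟨hval2, hq4⟩ := hval k hk hne
  refine ⟨k, hk, hval2, ?_⟩
  intro i hi hik
  by_contra hne2
  obtain ⟨hvi, -⟩ := hval i hi hne2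
  have hsub : ({i, k} : Finset ℕ) ⊆ Finset.range n := by
    intro x hx
    simp only [Finset.mem_insert, Finset.mem_singleton] at hx
    rcases hx with rfl | rfl <;> exact Finset.mem_range.2 (by omega)
  have h8 : (8 : ℤ) ≤ ∑ j ∈ Finset.range n, u j ^ 2 := by
    have := Finset.sum_le_sum_of_subset_of_nonneg hsub
      (fun j _ _ => sq_nonneg (u j))
    have hpair : ∑ j ∈ ({i, k} : Finset ℕ), u j ^ 2 = u i ^ 2 + u k ^ 2 :=
      Finset.sum_pair hik
    rcases hvi with h | h <;> rcases hval2 with h' | h' <;>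
      rw [hpair, h, h'] at this <;> norm_num at this ⊢ <;> linarith
  omega

set_option maxHeartbeats 1000000 in
/-- For `R` of type `B_n`, `n ≥ 2`, the induced map
`ρ : Λ_w∨/Λ_r∨ → Λ_w/Λ_r` is zero, i.e. `φ` maps the coweight lattice into
the root lattice. -/
theorem stmt7 {V : Type} [AddCommGroup V] [Module ℝ V] [FiniteDimensional ℝ V]
    (D : RootSystemData V)
    (hnormV : D.NormalizedPrimal) (hnormVd : D.NormalizedDual)
    (φ : Module.Dual ℝ V →ₗ[ℝ] V)
    (hφ : ∀ x y : Module.Dual ℝ V, x (φ y) = 2 * D.Bd x y)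
    (n : ℕ) (hn : 2 ≤ n)
    -- a base of simple roots of type `B_n`
    (b : Fin n → V) (hb : ∀ i, b i ∈ D.roots)
    (hlin : LinearIndependent ℝ b)
    (hspan : Submodule.span ℝ (Set.range b) = ⊤)
    (hgen : ∀ α ∈ D.roots, α ∈ AddSubgroup.closure (Set.range b))
    (hcartan : ∀ i j, D.coroot (b j) (b i) = ((cartanB n i j : ℤ) : ℝ)) :
    ∀ x ∈ D.coweightLattice, φ x ∈ D.rootLattice := by
  intro x hx
  have hn1 : n - 1 < n := by omega
  have hn2 : n - 2 < n := by omega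
  -- ℕ-indexed simple roots
  obtain ⟨bN, hbN⟩ : ∃ g : ℕ → V, ∀ j : Fin n, g j.val = b j :=
    ⟨fun j => if h : j < n then b ⟨j, h⟩ else 0, fun j => by simp⟩
  have hbNmem : ∀ j, j < n → bN j ∈ D.roots := fun j hj => by
    rw [show bN j = b ⟨j, hj⟩ from hbN ⟨j, hj⟩]; exact hb _
  have hBpos : ∀ β ∈ D.roots, 0 < D.B β β := fun β hβ => D.B_pos β (D.root_ne_zero β hβ)
  have hcorN : ∀ i j, (hi : i < n) → (hj : j < n) →
      D.coroot (bN j) (bN i) = ((cartanN n i j : ℤ) : ℝ) := by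
    intro i j hi hj
    rw [show bN j = b ⟨j, hj⟩ from hbN ⟨j, hj⟩, show bN i = b ⟨i, hi⟩ from hbN ⟨i, hi⟩,
      hcartan ⟨i, hi⟩ ⟨j, hj⟩, cartanB_eq]
  have hgramN : ∀ i j, (hi : i < n) → (hj : j < n) →
      D.B (bN j) (bN i) = ((cartanN n i j : ℤ) : ℝ) * D.B (bN j) (bN j) / 2 := by
    intro i j hi hj
    have h := D.coroot_eq (bN j) (hbNmem j hj) (bN i)
    rw [hcorN i j hi hj] at h
    have hne : D.B (bN j) (bN j) ≠ 0 := ne_of_gt (hBpos _ (hbNmem j hj))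
    rw [h]
    field_simp
  have hsymN : ∀ i j, (hi : i < n) → (hj : j < n) →
      ((cartanN n i j : ℤ) : ℝ) * D.B (bN j) (bN j)
        = ((cartanN n j i : ℤ) : ℝ) * D.B (bN i) (bN i) := by
    intro i j hi hj
    have h1 := hgramN i j hi hj
    have h2 := hgramN j i hj hi
    have h3 := D.B_symm (bN i) (bN j)
    linarith
  set s : ℝ := D.B (bN (n - 1)) (bN (n - 1)) with hs_def
  have hspos : 0 < s := hBpos _ (hbNmem _ hn1)
  have hBval : ∀ j, j < n - 1 → D.B (bN j) (bN j) = 2 * s := by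
    have haux : ∀ k j, j + k = n - 2 → j < n → D.B (bN j) (bN j) = 2 * s := by
      intro k
      induction k with
      | zero =>
          intro j hjk hj
          have e := hsymN j (n - 1) hj hn1
          have c1 : cartanN n j (n - 1) = -2 := by unfold cartanN; split_ifs <;> omega
          have c2 : cartanN n (n - 1) j = -1 := by unfold cartanN; split_ifs <;> omega
          rw [c1, c2] at e
          push_cast at e
          linarith
      | succ k ih =>
          intro j hjk hj
          have hj1 : j + 1 < n := by omega
          have e := hsymN j (j + 1) hj hj1
          have c1 : cartanN n j (j + 1) = -1 := by unfold cartanN; split_ifs <;> omega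
          have c2 : cartanN n (j + 1) j = -1 := by unfold cartanN; split_ifs <;> omega
          have hih := ih (j + 1) (by omega) hj1
          rw [c1, c2] at e
          push_cast at e
          linarith
    intro j hj
    exact haux (n - 2 - j) j (by omega) (by omega)
  -- coordinates of roots
  have hcoords : ∀ β ∈ D.roots, ∃ v : ℕ → ℤ,
      β = ∑ i ∈ Finset.range n, ((v i : ℤ) : ℝ) • bN i := by
    intro β hβ
    have hcl := hgen β hβ
    clear hβ
    induction hcl using AddSubgroup.closure_induction with
    | mem z hz =>
        obtain ⟨i0, rfl⟩ := hz
        refine ⟨fun k => if k = i0.val then 1 else 0, ?_⟩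
        have hpt : ∀ i ∈ Finset.range n,
            (((if i = i0.val then (1:ℤ) else 0) : ℤ) : ℝ) • bN i
              = if i = i0.val then bN i else 0 := by
          intro i _
          split_ifs <;> simp
        rw [Finset.sum_congr rfl hpt, Finset.sum_ite_eq' (Finset.range n) i0.val bN,
          if_pos (Finset.mem_range.2 i0.isLt), hbN i0]
    | zero =>
        exact ⟨0, by simp⟩
    | add z w hz hw ihz ihw =>
        obtain ⟨v1, hv1⟩ := ihz
        obtain ⟨v2, hv2⟩ := ihw
        refine ⟨v1 + v2, ?_⟩
        rw [hv1, hv2, ← Finset.sum_add_distrib]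
        refine Finset.sum_congr rfl fun i _ => ?_
        push_cast [Pi.add_apply]
        rw [add_smul]
    | neg z hz ihz =>
        obtain ⟨v1, hv1⟩ := ihz
        refine ⟨-v1, ?_⟩
        rw [hv1, ← Finset.sum_neg_distrib]
        refine Finset.sum_congr rfl fun i _ => ?_
        push_cast [Pi.neg_apply]
        rw [neg_smul]
  -- every root has square length s or 2s
  have hqlen : ∀ β ∈ D.roots, ∃ q : ℤ, 1 ≤ q ∧ q ≤ 2 ∧ D.B β β = (q : ℝ) * s := by
    intro β hβ
    obtain ⟨v, hβv⟩ := hcoords β hβ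
    set u : ℕ → ℤ := fun k => match k with
      | 0 => v 0
      | (k + 1) => v (k + 1) - v k with hu_def
    have hu0 : u 0 = v 0 := rfl
    have hus : ∀ k, u (k + 1) = v (k + 1) - v k := fun k => rfl
    have hu' : u (n - 1) = v (n - 1) - v (n - 2) := by
      have := hus (n - 2)
      rwa [show n - 2 + 1 = n - 1 by omega] at this
    set q : ℤ := ∑ k ∈ Finset.range n, u k ^ 2 with hq_def
    set w : ℕ → ℤ := fun j => ∑ i ∈ Finset.range n, v i * cartanN n i j with hw_def
    have hsplit : ∀ f : ℕ → ℤ, ∑ k ∈ Finset.range n, f k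
        = ∑ k ∈ Finset.range (n - 1), f k + f (n - 1) := by
      intro f
      have := Finset.sum_range_succ f (n - 1)
      rwa [show n - 1 + 1 = n by omega] at this
    have hsplitR : ∀ f : ℕ → ℝ, ∑ k ∈ Finset.range n, f k
        = ∑ k ∈ Finset.range (n - 1), f k + f (n - 1) := by
      intro f
      have := Finset.sum_range_succ f (n - 1)
      rwa [show n - 1 + 1 = n by omega] at this
    have hwcol : ∀ j, j < n → w j = 2 * v j
        - (if j = 0 then 0 else (if j + 1 = n then 2 else 1) * v (j - 1))
        - (if j + 1 = n then 0 else v (j + 1)) := by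
      intro j hj
      have h := colsum (R := ℤ) n j hj v
      simp only [Int.cast_id] at h
      simp only [hw_def]
      exact h
    have hw1 : ∀ j, j < n - 1 → w j = u j - u (j + 1) := by
      intro j hj
      rw [hwcol j (by omega)]
      simp only [if_neg (show ¬ j + 1 = n by omega)]
      rcases Nat.eq_zero_or_pos j with rfl | h0
      · rw [if_pos rfl, hu0, hus 0]; ring
      · simp only [if_neg (show ¬ j = 0 by omega)]
        have h1 : u j = v j - v (j - 1) := by
          have := hus (j - 1)
          rwa [show j - 1 + 1 = j by omega] at this
        rw [h1, hus j]; ring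
    have hw2 : w (n - 1) = 2 * u (n - 1) := by
      rw [hwcol (n - 1) hn1]
      simp only [if_pos (show n - 1 + 1 = n by omega), if_neg (show ¬ n - 1 = 0 by omega)]
      rw [hu', show n - 1 - 1 = n - 2 by omega]; ring
    have hwreal : ∀ j, j < n → D.coroot (bN j) β = ((w j : ℤ) : ℝ) := by
      intro j hj
      rw [hβv, map_sum]
      have hpt : ∀ i ∈ Finset.range n, D.coroot (bN j) (((v i : ℤ) : ℝ) • bN i)
          = ((v i * cartanN n i j : ℤ) : ℝ) := by
        intro i hi
        rw [map_smul, hcorN i j (Finset.mem_range.1 hi) hj, smul_eq_mul]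
        push_cast
        ring
      rw [Finset.sum_congr rfl hpt, ← Int.cast_sum]
    have hBjβ : ∀ j, j < n → D.B (bN j) β = ((w j : ℤ) : ℝ) * D.B (bN j) (bN j) / 2 := by
      intro j hj
      have h := D.coroot_eq (bN j) (hbNmem j hj) β
      rw [hwreal j hj] at h
      have hne : D.B (bN j) (bN j) ≠ 0 := ne_of_gt (hBpos _ (hbNmem j hj))
      rw [h]
      field_simp
    have hqid : ∑ j ∈ Finset.range (n - 1), v j * (u j - u (j + 1)) + v (n - 1) * u (n - 1)
        = q := by
      have hab := abel_sum v u hu0 hus (n - 2)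
      rw [show n - 2 + 1 = n - 1 by omega] at hab
      rw [hab, hq_def, hsplit (fun k => u k ^ 2)]
      linear_combination (-(u (n - 1))) * hu'
    have hBββ : D.B β β = (q : ℝ) * s := by
      have h1 : D.B β β = ∑ j ∈ Finset.range n, ((v j : ℤ) : ℝ) * D.B (bN j) β := by
        nth_rewrite 2 [hβv]
        rw [map_sum]
        refine Finset.sum_congr rfl fun j _ => ?_
        rw [map_smul, smul_eq_mul, D.B_symm β (bN j)]
      rw [h1]
      have hpt2 : ∀ j ∈ Finset.range n, ((v j : ℤ) : ℝ) * D.B (bN j) β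
          = ((v j : ℤ) : ℝ) * (((w j : ℤ) : ℝ) * D.B (bN j) (bN j) / 2) := by
        intro j hj
        rw [hBjβ j (Finset.mem_range.1 hj)]
      rw [Finset.sum_congr rfl hpt2, hsplitR]
      have hlast : ((v (n - 1) : ℤ) : ℝ) * (((w (n - 1) : ℤ) : ℝ)
            * D.B (bN (n - 1)) (bN (n - 1)) / 2)
          = ((v (n - 1) * u (n - 1) : ℤ) : ℝ) * s := by
        rw [hw2, ← hs_def]
        push_cast
        ring
      have hterm : ∀ j ∈ Finset.range (n - 1), ((v j : ℤ) : ℝ) * (((w j : ℤ) : ℝ)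
            * D.B (bN j) (bN j) / 2)
          = ((v j * (u j - u (j + 1)) : ℤ) : ℝ) * s := by
        intro j hj
        have hj' := Finset.mem_range.1 hj
        rw [hw1 j hj', hBval j hj']
        push_cast
        ring
      rw [Finset.sum_congr rfl hterm, hlast, ← Finset.sum_mul, ← Int.cast_sum, ← hqid]
      push_cast
      ring
    have hq0 : 0 ≤ q := by
      rw [hq_def]
      exact Finset.sum_nonneg fun i _ => sq_nonneg (u i)
    have hq1 : 1 ≤ q := by
      by_contra hcon
      have hq0' : q = 0 := by omega
      have huz : ∀ k, k < n → u k = 0 := by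
        intro k hk
        have hsq : u k ^ 2 = 0 := by
          have := (Finset.sum_eq_zero_iff_of_nonneg
            (fun i (_ : i ∈ Finset.range n) => sq_nonneg (u i))).1 (hq_def ▸ hq0')
          exact this k (Finset.mem_range.2 hk)
        exact pow_eq_zero_iff (by norm_num) |>.1 hsq
      have hvz : ∀ k, k < n → v k = 0 := by
        intro k
        induction k with
        | zero => intro h0; rw [← hu0]; exact huz 0 h0
        | succ k ih =>
            intro hk1
            have h1 := hus k
            have h2 := huz (k + 1) hk1
            have h3 := ih (by omega)
            omega
      have hβ0 : β = 0 := by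
        rw [hβv]
        apply Finset.sum_eq_zero
        intro i hi
        rw [hvz i (Finset.mem_range.1 hi)]
        simp
      exact D.root_ne_zero β hβ hβ0
    have hsne : s ≠ 0 := ne_of_gt hspos
    have hmq : ∀ j, j < n → ∃ m : ℤ, m * q * s = ((w j : ℤ) : ℝ) * D.B (bN j) (bN j) := by
      intro j hj
      obtain ⟨m, hm⟩ := D.crystallographic β hβ (bN j) (hbNmem j hj)
      rw [D.coroot_eq β hβ (bN j), D.B_symm β (bN j)] at hm
      have hne : D.B β β ≠ 0 := ne_of_gt (hBpos β hβ)
      refine ⟨m, ?_⟩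
      have e1 : (m : ℝ) * D.B β β = 2 * D.B (bN j) β := by
        field_simp at hm
        linarith [hm]
      rw [hBββ, hBjβ j hj] at e1
      push_cast
      linarith [e1]
    have hdvd1 : ∀ j, j < n - 1 → q ∣ 2 * (u j - u (j + 1)) := by
      intro j hj
      obtain ⟨m, hm⟩ := hmq j (by omega)
      rw [hBval j hj] at hm
      have e3 : ((m * q : ℤ) : ℝ) * s = ((2 * w j : ℤ) : ℝ) * s := by
        push_cast
        linear_combination hm
      have e4 : m * q = 2 * w j := by
        exact_mod_cast mul_right_cancel₀ hsne e3
      refine ⟨m, ?_⟩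
      rw [← hw1 j hj]
      linarith [e4]
    have hdvd2 : q ∣ 2 * u (n - 1) := by
      obtain ⟨m, hm⟩ := hmq (n - 1) hn1
      rw [← hs_def] at hm
      have e3 : ((m * q : ℤ) : ℝ) * s = ((w (n - 1) : ℤ) : ℝ) * s := by
        push_cast
        linear_combination hm
      have e4 : m * q = w (n - 1) := by
        exact_mod_cast mul_right_cancel₀ hsne e3
      refine ⟨m, ?_⟩
      rw [← hw2]
      linarith [e4]
    have hdvd : ∀ k, k < n → q ∣ 2 * u k := by
      have haux : ∀ t k, k + t = n - 1 → q ∣ 2 * u k := by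
        intro t
        induction t with
        | zero => intro k hk; rw [show k = n - 1 by omega]; exact hdvd2
        | succ t ih =>
            intro k hk
            have h1 := hdvd1 k (by omega)
            have h2 := ih (k + 1) (by omega)
            have h3 : 2 * u k = 2 * (u k - u (k + 1)) + 2 * u (k + 1) := by ring
            rw [h3]
            exact dvd_add h1 h2
      intro k hk
      exact haux (n - 1 - k) k (by omega)
    have hq2 : q ≤ 2 := by
      by_contra hq3
      obtain ⟨k0, hk0n, hc, hzero⟩ := bigq n u q hq_def hdvd (by omega)
      set c : ℤ := u k0 with hc_def
      have hvform : ∀ j, j < n → v j = if k0 ≤ j then c else 0 := by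
        intro j
        induction j with
        | zero =>
            intro h0
            rw [← hu0]
            by_cases h : k0 = 0
            · rw [if_pos (by omega), hc_def, h]
            · rw [if_neg (by omega)]
              exact hzero 0 h0 (by omega)
        | succ j ih =>
            intro hj1
            have hv : v (j + 1) = u (j + 1) + v j := by
              have := hus j; omega
            rw [hv, ih (by omega)]
            by_cases h : j + 1 = k0
            · rw [if_neg (by omega), if_pos (by omega), h, ← hc_def]
              ring
            · have h3 : u (j + 1) = 0 := hzero (j + 1) hj1 (by omega)
              by_cases h2 : k0 ≤ j
              · rw [if_pos h2, if_pos (by omega)]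
                omega
              · rw [if_neg h2, if_neg (by omega)]
                omega
      set γ : ℕ → V := fun k => ∑ j ∈ Finset.range n, (if k ≤ j then (1 : ℝ) else 0) • bN j
        with hγ_def
      have hβγ : β = (c : ℝ) • γ k0 := by
        rw [hβv]
        simp only [hγ_def]
        rw [Finset.smul_sum]
        refine Finset.sum_congr rfl fun j hj => ?_
        rw [hvform j (Finset.mem_range.1 hj), smul_smul]
        split_ifs with h <;> simp
      have hcor_γ : ∀ k, k < n - 1 → D.coroot (bN k) ((c : ℝ) • γ k) = (c : ℝ) := by
        intro k hk
        rw [map_smul, smul_eq_mul]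
        have hγval : D.coroot (bN k) (γ k) = 1 := by
          simp only [hγ_def]
          rw [map_sum]
          have hpt : ∀ j ∈ Finset.range n,
              D.coroot (bN k) ((if k ≤ j then (1 : ℝ) else 0) • bN j)
                = (if j = k then (2 : ℝ) else 0) + (if j = k + 1 then (-1 : ℝ) else 0) := by
            intro j hjr
            have hjn := Finset.mem_range.1 hjr
            rw [map_smul, hcorN j k hjn (by omega), smul_eq_mul]
            by_cases h1 : j = k
            · subst h1
              have hcc : cartanN n j j = 2 := by unfold cartanN; split_ifs <;> omega
              rw [hcc, if_pos le_rfl, if_pos rfl, if_neg (by omega)]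
              norm_num
            · by_cases h2 : j = k + 1
              · subst h2
                have hcc : cartanN n (k + 1) k = -1 := by unfold cartanN; split_ifs <;> omega
                rw [hcc, if_pos (by omega), if_neg h1, if_pos rfl]
                norm_num
              · by_cases h3 : k ≤ j
                · have hcc : cartanN n j k = 0 := by unfold cartanN; split_ifs <;> omega
                  rw [hcc, if_neg h1, if_neg h2]
                  norm_num
                · rw [if_neg h3, if_neg h1, if_neg h2]
                  norm_num
          rw [Finset.sum_congr rfl hpt, Finset.sum_add_distrib,
            Finset.sum_ite_eq' (Finset.range n) k (fun _ => (2 : ℝ)),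
            Finset.sum_ite_eq' (Finset.range n) (k + 1) (fun _ => (-1 : ℝ)),
            if_pos (Finset.mem_range.2 (by omega)), if_pos (Finset.mem_range.2 (by omega))]
          norm_num
        rw [hγval]
        ring
      have hγstep : ∀ k, k < n - 1 → γ k = bN k + γ (k + 1) := by
        intro k hk
        simp only [hγ_def]
        have hpt : ∀ j ∈ Finset.range n, (if k ≤ j then (1 : ℝ) else 0) • bN j
            = (if j = k then (1 : ℝ) else 0) • bN j
              + (if k + 1 ≤ j then (1 : ℝ) else 0) • bN j := by
          intro j _
          have hsum : (if k ≤ j then (1 : ℝ) else 0)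
              = (if j = k then (1 : ℝ) else 0) + (if k + 1 ≤ j then (1 : ℝ) else 0) := by
            split_ifs <;> (try norm_num) <;> omega
          rw [hsum, add_smul]
        rw [Finset.sum_congr rfl hpt, Finset.sum_add_distrib]
        congr 1
        have hpt2 : ∀ j ∈ Finset.range n, (if j = k then (1 : ℝ) else 0) • bN j
            = if j = k then bN j else 0 := by
          intro j _
          split_ifs <;> simp
        rw [Finset.sum_congr rfl hpt2, Finset.sum_ite_eq' (Finset.range n) k bN,
          if_pos (Finset.mem_range.2 (by omega))]
      have hroots : ∀ t k, k + t = n - 1 → ((c : ℝ) • γ k ∈ D.roots) → False := by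
        intro t
        induction t with
        | zero =>
            intro k hk hmem
            have hkn : k = n - 1 := by omega
            subst hkn
            have hγn : γ (n - 1) = bN (n - 1) := by
              simp only [hγ_def]
              have hpt : ∀ j ∈ Finset.range n, (if n - 1 ≤ j then (1 : ℝ) else 0) • bN j
                  = if j = n - 1 then bN j else 0 := by
                intro j hj
                have hjn := Finset.mem_range.1 hj
                by_cases h : j = n - 1
                · rw [if_pos (by omega), if_pos h, one_smul]
                · rw [if_neg (by omega), if_neg h, zero_smul]
              rw [Finset.sum_congr rfl hpt, Finset.sum_ite_eq' (Finset.range n) (n - 1) bN,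
                if_pos (Finset.mem_range.2 hn1)]
            rw [hγn] at hmem
            have hred := D.reduced (bN (n - 1)) (hbNmem _ hn1) ((c : ℤ) : ℝ) hmem
            rcases hc with h | h <;> rcases hred with h' | h' <;> rw [h] at h' <;> norm_num at h'
        | succ t ih =>
            intro k hk hmem
            have hkn : k < n - 1 := by omega
            have href := D.reflect_mem (bN k) (hbNmem k (by omega)) ((c : ℝ) • γ k) hmem
            rw [hcor_γ k hkn] at href
            have heq : (c : ℝ) • γ k - (c : ℝ) • bN k = (c : ℝ) • γ (k + 1) := by
              rw [hγstep k hkn, smul_add]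
              abel
            rw [heq] at href
            exact ih (k + 1) (by omega) href
      exact hroots (n - 1 - k0) k0 (by omega) (hβγ ▸ hβ)
    exact ⟨q, hq1, hq2, hBββ⟩
  -- dual form facts
  have hcorne : ∀ β ∈ D.roots, D.coroot β ≠ 0 := by
    intro β hβ h0
    have h2 := D.coroot_self β hβ
    rw [h0] at h2
    simp at h2
  have hddpos : ∀ β ∈ D.roots, 0 < D.Bd (D.coroot β) (D.coroot β) :=
    fun β hβ => D.Bd_pos _ (hcorne β hβ)
  have hddsym : ∀ α β, α ∈ D.roots → β ∈ D.roots →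
      D.coroot β α * D.Bd (D.coroot α) (D.coroot α)
        = D.coroot α β * D.Bd (D.coroot β) (D.coroot β) := by
    intro α β hα hβ
    have h1 := D.dual_coroot_eq α hα (D.coroot β)
    have h2 := D.dual_coroot_eq β hβ (D.coroot α)
    have hda : D.Bd (D.coroot α) (D.coroot α) ≠ 0 := ne_of_gt (hddpos α hα)
    have hdb : D.Bd (D.coroot β) (D.coroot β) ≠ 0 := ne_of_gt (hddpos β hβ)
    have hsymm := D.Bd_symm (D.coroot α) (D.coroot β)
    field_simp at h1 h2
    rw [h1, h2, hsymm]
  have hstep : ∀ α β, α ∈ D.roots → β ∈ D.roots → D.B α β ≠ 0 →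
      D.Bd (D.coroot α) (D.coroot α) * D.B α α
        = D.Bd (D.coroot β) (D.coroot β) * D.B β β := by
    intro α β hα hβ hne
    have e := hddsym α β hα hβ
    rw [D.coroot_eq β hβ α, D.coroot_eq α hα β, D.B_symm β α] at e
    have ha : D.B α α ≠ 0 := ne_of_gt (hBpos α hα)
    have hbb : D.B β β ≠ 0 := ne_of_gt (hBpos β hβ)
    field_simp at e
    have e2 : (2 * D.B α β) * (D.Bd (D.coroot α) (D.coroot α) * D.B α α)
        = (2 * D.B α β) * (D.Bd (D.coroot β) (D.coroot β) * D.B β β) := by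
      linear_combination (2 * D.B α β) * e
    exact mul_left_cancel₀ (mul_ne_zero two_ne_zero hne) e2
  have hchain : ∀ β, D.SameComponent (bN 0) β →
      D.Bd (D.coroot (bN 0)) (D.coroot (bN 0)) * D.B (bN 0) (bN 0)
        = D.Bd (D.coroot β) (D.coroot β) * D.B β β := by
    intro β h
    induction h with
    | refl => rfl
    | tail hac hr ih => exact ih.trans (hstep _ _ hr.1 hr.2.1 hr.2.2)
  have hshort : D.ShortCoroot (bN 0) := by
    refine ⟨hbNmem 0 (by omega), ?_⟩
    intro β hβ hcomp
    have hch := hchain β hcomp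
    rw [hBval 0 (by omega)] at hch
    obtain ⟨q, hq1, hq2, hq3⟩ := hqlen β hβ
    have hBle : D.B β β ≤ 2 * s := by
      rw [hq3]
      have : (q : ℝ) ≤ 2 := by exact_mod_cast hq2
      nlinarith
    have hBbpos : 0 < D.B β β := hBpos β hβ
    have hd0pos : 0 < D.Bd (D.coroot (bN 0)) (D.coroot (bN 0)) := hddpos _ (hbNmem 0 (by omega))
    have h1 : D.Bd (D.coroot (bN 0)) (D.coroot (bN 0)) * D.B β β
        ≤ D.Bd (D.coroot β) (D.coroot β) * D.B β β := by nlinarith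
    exact le_of_mul_le_mul_right h1 hBbpos
  have hdd0 : D.Bd (D.coroot (bN 0)) (D.coroot (bN 0)) = 1 := hnormVd _ hshort
  have hddsymN : ∀ i j, (hi : i < n) → (hj : j < n) →
      ((cartanN n i j : ℤ) : ℝ) * D.Bd (D.coroot (bN i)) (D.coroot (bN i))
        = ((cartanN n j i : ℤ) : ℝ) * D.Bd (D.coroot (bN j)) (D.coroot (bN j)) := by
    intro i j hi hj
    have e := hddsym (bN i) (bN j) (hbNmem i hi) (hbNmem j hj)
    rw [hcorN i j hi hj, hcorN j i hj hi] at e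
    linarith
  have hddlong : ∀ j, j < n - 1 →
      D.Bd (D.coroot (bN j)) (D.coroot (bN j))
        = D.Bd (D.coroot (bN (n - 2))) (D.coroot (bN (n - 2))) := by
    have haux : ∀ k j, j + k = n - 2 → j < n →
        D.Bd (D.coroot (bN j)) (D.coroot (bN j))
          = D.Bd (D.coroot (bN (n - 2))) (D.coroot (bN (n - 2))) := by
      intro k
      induction k with
      | zero => intro j hjk hj; rw [show j = n - 2 by omega]
      | succ k ih =>
          intro j hjk hj
          have hj1 : j + 1 < n := by omega
          have e := hddsymN j (j + 1) hj hj1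
          have c1 : cartanN n j (j + 1) = -1 := by unfold cartanN; split_ifs <;> omega
          have c2 : cartanN n (j + 1) j = -1 := by unfold cartanN; split_ifs <;> omega
          have hih := ih (j + 1) (by omega) hj1
          rw [c1, c2] at e
          push_cast at e
          linarith
    intro j hj
    exact haux (n - 2 - j) j (by omega) (by omega)
  have hddlast : D.Bd (D.coroot (bN (n - 1))) (D.coroot (bN (n - 1)))
      = 2 * D.Bd (D.coroot (bN (n - 2))) (D.coroot (bN (n - 2))) := by
    have e := hddsymN (n - 2) (n - 1) hn2 hn1
    have c1 : cartanN n (n - 2) (n - 1) = -2 := by unfold cartanN; split_ifs <;> omega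
    have c2 : cartanN n (n - 1) (n - 2) = -1 := by unfold cartanN; split_ifs <;> omega
    rw [c1, c2] at e
    push_cast at e
    linarith
  have hddval : ∀ j, j < n →
      D.Bd (D.coroot (bN j)) (D.coroot (bN j)) = (if j + 1 = n then 2 else 1) := by
    intro j hj
    have hd2 : D.Bd (D.coroot (bN (n - 2))) (D.coroot (bN (n - 2))) = 1 := by
      rw [← hddlong 0 (by omega)]; exact hdd0
    by_cases h : j + 1 = n
    · rw [if_pos h, show j = n - 1 by omega, hddlast, hd2]; norm_num
    · rw [if_neg h, hddlong j (by omega), hd2]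
  -- the coweight x, in coordinates
  obtain ⟨pN, hpN⟩ : ∃ p : ℕ → ℤ, ∀ j, j < n → x (bN j) = ((p j : ℤ) : ℝ) := by
    have h : ∀ j : ℕ, ∃ m : ℤ, j < n → x (bN j) = (m : ℝ) := by
      intro j
      by_cases hj : j < n
      · obtain ⟨m, hm⟩ := hx (bN j) (hbNmem j hj)
        exact ⟨m, fun _ => hm⟩
      · exact ⟨0, fun h => absurd h hj⟩
    choose p hp using h
    exact ⟨p, hp⟩
  -- coordinates of φ x
  have hsptop : ⊤ ≤ Submodule.span ℝ (Set.range b) := by rw [hspan]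
  set Bb : Basis (Fin n) ℝ V := Basis.mk hlin hsptop with hBb_def
  obtain ⟨cN, hcN⟩ : ∃ c : ℕ → ℝ, ∀ j : Fin n, c j.val = Bb.repr (φ x) j :=
    ⟨fun i => if h : i < n then Bb.repr (φ x) ⟨i, h⟩ else 0, fun j => by simp⟩
  have hrep : φ x = ∑ i ∈ Finset.range n, cN i • bN i := by
    have h0 := Basis.sum_repr Bb (φ x)
    rw [← h0, ← Fin.sum_univ_eq_sum_range (fun i => cN i • bN i) n]
    refine Finset.sum_congr rfl fun i _ => ?_
    rw [hcN i, hbN i, hBb_def, Basis.mk_apply]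
  have hEq : ∀ j, j < n → ∑ i ∈ Finset.range n, cN i * ((cartanN n i j : ℤ) : ℝ)
      = ((pN j : ℤ) : ℝ) * D.Bd (D.coroot (bN j)) (D.coroot (bN j)) := by
    intro j hj
    have h1 : D.coroot (bN j) (φ x)
        = ∑ i ∈ Finset.range n, cN i * ((cartanN n i j : ℤ) : ℝ) := by
      rw [hrep, map_sum]
      refine Finset.sum_congr rfl fun i hi => ?_
      rw [map_smul, hcorN i j (Finset.mem_range.1 hi) hj, smul_eq_mul]
    have h2 : D.coroot (bN j) (φ x) = 2 * D.Bd (D.coroot (bN j)) x := hφ _ x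
    have h3 := D.dual_coroot_eq (bN j) (hbNmem j hj) x
    have hdne : D.Bd (D.coroot (bN j)) (D.coroot (bN j)) ≠ 0 :=
      ne_of_gt (hddpos _ (hbNmem j hj))
    rw [hpN j hj] at h3
    rw [← h1, h2]
    field_simp at h3
    linarith [h3]
  have hE1 : ∀ j, j < n - 1 →
      2 * cN j - (if j = 0 then 0 else cN (j - 1)) - cN (j + 1) = ((pN j : ℤ) : ℝ) := by
    intro j hj
    have h := hEq j (by omega)
    rw [colsum n j (by omega) cN, hddval j (by omega)] at h
    simp only [if_neg (show ¬ j + 1 = n by omega)] at h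
    rcases Nat.eq_zero_or_pos j with rfl | h0
    · rw [if_pos rfl] at h
      rw [if_pos rfl]
      linarith [h]
    · rw [if_neg (show ¬ j = 0 by omega)] at h
      rw [if_neg (show ¬ j = 0 by omega)]
      linarith [h]
  have hElast : cN (n - 1) - cN (n - 2) = ((pN (n - 1) : ℤ) : ℝ) := by
    have h := hEq (n - 1) hn1
    rw [colsum n (n - 1) hn1 cN, hddval (n - 1) hn1] at h
    simp only [if_pos (show n - 1 + 1 = n by omega),
      if_neg (show ¬ n - 1 = 0 by omega)] at h
    rw [show n - 1 - 1 = n - 2 by omega] at h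
    linarith [h]
  have hT : ∀ t k, k + t = n - 1 →
      ∃ z : ℤ, cN k - (if k = 0 then 0 else cN (k - 1)) = (z : ℝ) := by
    intro t
    induction t with
    | zero =>
        intro k hk
        rw [show k = n - 1 by omega]
        refine ⟨pN (n - 1), ?_⟩
        rw [if_neg (show ¬ n - 1 = 0 by omega), show n - 1 - 1 = n - 2 by omega]
        exact hElast
    | succ t ih =>
        intro k hk
        obtain ⟨z, hz⟩ := ih (k + 1) (by omega)
        rw [if_neg (show ¬ k + 1 = 0 by omega), show k + 1 - 1 = k by omega] at hz
        have h := hE1 k (by omega)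
        refine ⟨pN k + z, ?_⟩
        push_cast
        rcases Nat.eq_zero_or_pos k with rfl | h0
        · rw [if_pos rfl] at h ⊢
          linarith
        · rw [if_neg (show ¬ k = 0 by omega)] at h ⊢
          linarith
  have hC : ∀ k, k < n → ∃ z : ℤ, cN k = (z : ℝ) := by
    intro k
    induction k with
    | zero =>
        intro h0
        obtain ⟨z, hz⟩ := hT (n - 1) 0 (by omega)
        rw [if_pos rfl] at hz
        exact ⟨z, by linarith⟩
    | succ k ih =>
        intro hk1
        obtain ⟨z1, hz1⟩ := hT (n - 1 - (k + 1)) (k + 1) (by omega)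
        obtain ⟨z2, hz2⟩ := ih (by omega)
        rw [if_neg (show ¬ k + 1 = 0 by omega), show k + 1 - 1 = k by omega, hz2] at hz1
        exact ⟨z1 + z2, by push_cast; linarith⟩
  rw [hrep]
  apply AddSubgroup.sum_mem
  intro i hi
  obtain ⟨z, hz⟩ := hC i (Finset.mem_range.1 hi)
  rw [hz, show (z : ℝ) • bN i = z • bN i from Int.cast_smul_eq_zsmul ℝ z (bN i)]
  exact AddSubgroup.zsmul_mem _
    (AddSubgroup.subset_closure (hbNmem i (Finset.mem_range.1 hi))) z
end

section
/- Let Π be the simple roots of a reduced root system R, Π_r = {α ∈ Π : f_α ∈ Λ_r}, Π' = Π \ Π_r, and let R' be the root system with simple roots the images α' of α ∈ Π' in V' = V/span{f_α : α ∈ Π_r}. Define s: Λ_w∨ → Λ'_w∨ by s(x) = x − Σ_{α∈Π_r} ⟨x, f_α⟩ α∨ (this lies in Λ'_w∨), and t: Λ'_w → Λ_w by t(f'_α) = d_α f_α for α ∈ Π'. Then the image of t∘φ'∘s − φ is contained in the root lattice Λ_r, where φ and φ' are the canonical maps from coweight to weight lattices for R and R' respectively. -/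
open Module

open scoped Classical

namespace Stmt15Aux

open RootSystemData

variable {V : Type} [AddCommGroup V] [Module ℝ V] (D : RootSystemData V)

lemma coroot_ne_zero {α : V} (hα : α ∈ D.roots) : D.coroot α ≠ 0 := by
  intro h
  have h2 := D.coroot_self α hα
  rw [h] at h2
  simpa using h2

lemma d_pos {α : V} (hα : α ∈ D.roots) : 0 < D.Bd (D.coroot α) (D.coroot α) :=
  D.Bd_pos _ (coroot_ne_zero D hα)

lemma B_root_pos {α : V} (hα : α ∈ D.roots) : 0 < D.B α α :=
  D.B_pos α (D.root_ne_zero α hα)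

/-- the key symmetry identity `d_α ⟨α∨, β⟩ = d_β ⟨β∨, α⟩` (both equal `2⟨α∨,β∨⟩_d`). -/
lemma d_coroot_symm {α β : V} (hα : α ∈ D.roots) (hβ : β ∈ D.roots) :
    D.Bd (D.coroot α) (D.coroot α) * D.coroot β α
      = D.Bd (D.coroot β) (D.coroot β) * D.coroot α β := by
  have h1 := D.dual_coroot_eq α hα (D.coroot β)
  have h2 := D.dual_coroot_eq β hβ (D.coroot α)
  have hdα := (d_pos D hα).ne'
  have hdβ := (d_pos D hβ).ne'
  rw [h1, h2, D.Bd_symm (D.coroot β) (D.coroot α)]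
  field_simp

/-- `⟨α∨, φ x⟩ = d_α ⟨x, α⟩`. -/
lemma coroot_phi (φ : Module.Dual ℝ V →ₗ[ℝ] V)
    (hφ : ∀ x y : Module.Dual ℝ V, x (φ y) = 2 * D.Bd x y)
    {α : V} (hα : α ∈ D.roots) (x : Module.Dual ℝ V) :
    D.coroot α (φ x) = D.Bd (D.coroot α) (D.coroot α) * x α := by
  have h1 := D.dual_coroot_eq α hα x
  have hdα := (d_pos D hα).ne'
  rw [hφ (D.coroot α) x, h1]
  field_simp

lemma dB_step {a b : V} (ha : a ∈ D.roots) (hb : b ∈ D.roots) (hab : D.B a b ≠ 0) :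
    D.Bd (D.coroot a) (D.coroot a) * D.B a a = D.Bd (D.coroot b) (D.coroot b) * D.B b b := by
  have h := d_coroot_symm D ha hb
  rw [D.coroot_eq b hb a, D.coroot_eq a ha b, D.B_symm b a] at h
  have hBa := (B_root_pos D ha).ne'
  have hBb := (B_root_pos D hb).ne'
  field_simp at h
  have h2 : D.B a b * (D.Bd (D.coroot a) (D.coroot a) * D.B a a)
      = D.B a b * (D.Bd (D.coroot b) (D.coroot b) * D.B b b) := by
    linear_combination D.B a b * h
  exact mul_left_cancel₀ hab h2

lemma dB_const {a b : V} (ha : a ∈ D.roots) (h : D.SameComponent a b) :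
    D.Bd (D.coroot a) (D.coroot a) * D.B a a = D.Bd (D.coroot b) (D.coroot b) * D.B b b := by
  induction h with
  | refl => rfl
  | tail h' hr ih => exact ih.trans (dB_step D hr.1 hr.2.1 hr.2.2)

lemma sameComponent_symm {a b : V} (h : D.SameComponent a b) : D.SameComponent b a := by
  have hs : Std.Symm (fun a b : V => a ∈ D.roots ∧ b ∈ D.roots ∧ D.B a b ≠ 0) := by
    refine ⟨?_⟩
    intro u v huv
    exact ⟨huv.2.1, huv.1, by rw [D.B_symm]; exact huv.2.2⟩
  exact Relation.ReflTransGen.stdSymm.symm _ _ h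

lemma exists_connector {a c : V} (ha : a ∈ D.roots) (h : D.SameComponent a c) :
    c ∈ D.roots → ∃ y ∈ D.roots, D.B y y = D.B a a ∧ D.B y c ≠ 0 := by
  induction h with
  | refl => exact fun _ => ⟨a, ha, rfl, (B_root_pos D ha).ne'⟩
  | @tail b c h' hr ih =>
    intro hc
    obtain ⟨y, hy, hyy, hyb⟩ := ih hr.1
    by_cases hyc : D.B y c ≠ 0
    · exact ⟨y, hy, hyy, hyc⟩
    · push_neg at hyc
      refine ⟨y - D.coroot b y • b, D.reflect_mem b hr.1 y hy, ?_, ?_⟩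
      · have hBb := (B_root_pos D hr.1).ne'
        rw [D.coroot_eq b hr.1 y]
        simp only [map_sub, map_smul, LinearMap.sub_apply, LinearMap.smul_apply,
          smul_eq_mul]
        rw [D.B_symm b y]
        field_simp
        rw [hyy]
        ring
      · have hBb := (B_root_pos D hr.1).ne'
        simp only [map_sub, map_smul, LinearMap.sub_apply, LinearMap.smul_apply,
          smul_eq_mul]
        rw [hyc, D.coroot_eq b hr.1 y]
        have h1 : D.B y b ≠ 0 := hyb
        have h2 : D.B b c ≠ 0 := hr.2.2
        rw [D.B_symm b y, zero_sub, neg_ne_zero]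
        exact mul_ne_zero (div_ne_zero (mul_ne_zero two_ne_zero h1) hBb) h2

lemma ratio_int {y c : V} (hy : y ∈ D.roots) (hc : c ∈ D.roots) (hB : D.B y c ≠ 0)
    (hge : D.B c c ≤ D.B y y) : ∃ n : ℤ, D.B y y / D.B c c = (n : ℝ) := by
  have hBy := B_root_pos D hy
  have hBc := B_root_pos D hc
  obtain ⟨m, hm⟩ := D.crystallographic y hy c hc
  obtain ⟨n, hn⟩ := D.crystallographic c hc y hy
  rw [D.coroot_eq y hy c] at hm
  rw [D.coroot_eq c hc y] at hn
  have hm' : (m : ℝ) * D.B y y = 2 * D.B y c := by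
    rw [← hm]; field_simp
  have hn' : (n : ℝ) * D.B c c = 2 * D.B y c := by
    rw [← hn, D.B_symm c y]; field_simp
  by_cases hv : D.B c c • y - D.B y c • c = 0
  · -- proportional case: y = ± c
    have h1 : D.B c c • y = D.B y c • c := sub_eq_zero.mp hv
    have hyt : y = (D.B y c / D.B c c) • c := by
      rw [div_eq_mul_inv, mul_comm, mul_smul, ← h1, ← mul_smul,
        inv_mul_cancel₀ hBc.ne', one_smul]
    have hmem : (D.B y c / D.B c c) • c ∈ D.roots := by rw [← hyt]; exact hy
    have hyy_cc : D.B y y = D.B c c := by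
      rcases D.reduced c hc _ hmem with ht | ht
      · rw [ht, one_smul] at hyt; rw [hyt]
      · rw [ht, neg_one_smul] at hyt
        rw [hyt]
        simp only [map_neg, LinearMap.neg_apply, neg_neg]
    exact ⟨1, by rw [hyy_cc, Int.cast_one]; exact div_self hBc.ne'⟩
  · -- non-proportional: strict Cauchy-Schwarz
    have hpos : 0 < D.B (D.B c c • y - D.B y c • c) (D.B c c • y - D.B y c • c) :=
      D.B_pos _ hv
    have hexp : D.B (D.B c c • y - D.B y c • c) (D.B c c • y - D.B y c • c)
        = D.B c c * (D.B c c * D.B y y - D.B y c * D.B y c) := by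
      simp only [map_sub, map_smul, LinearMap.sub_apply, LinearMap.smul_apply, smul_eq_mul]
      rw [D.B_symm c y]
      ring
    rw [hexp] at hpos
    have hcs : D.B y c * D.B y c < D.B y y * D.B c c := by nlinarith
    have hyc2 : 0 < D.B y c * D.B y c := mul_self_pos.mpr hB
    have hprod : (m : ℝ) * n * (D.B y y * D.B c c) = 4 * (D.B y c * D.B y c) := by
      linear_combination (n : ℝ) * D.B c c * hm' + 2 * D.B y c * hn'
    have hmn_pos : (0 : ℝ) < (m : ℝ) * n := by nlinarith [mul_pos hBy hBc, hprod, hyc2]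
    have hmn_lt : (m : ℝ) * n < 4 := by nlinarith [mul_pos hBy hBc, hprod, hcs]
    have hm_ne : (m : ℝ) ≠ 0 := by
      intro h0
      rw [h0, zero_mul] at hm'
      have : D.B y c = 0 := by linarith
      exact hB this
    have hd : (m : ℝ) * n * D.B c c = (m : ℝ) * m * D.B y y := by
      linear_combination (m : ℝ) * hn' - (m : ℝ) * hm'
    have hm2 : (m : ℝ) * m ≤ (m : ℝ) * n := by
      nlinarith [sq_nonneg (m : ℝ), hge, hBc, hd]
    have hmZ : m = 1 ∨ m = -1 := by
      have h4 : (m : ℝ) * m < 4 := lt_of_le_of_lt hm2 hmn_lt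
      have h4Z : m * m < 4 := by exact_mod_cast h4
      have hm0 : m ≠ 0 := by exact_mod_cast hm_ne
      have hlt : m < 2 := by by_contra h; push_neg at h; nlinarith
      have hgt : -2 < m := by by_contra h; push_neg at h; nlinarith
      omega
    have hmm1 : (m : ℝ) * m = 1 := by
      rcases hmZ with h | h <;> rw [h] <;> norm_num
    refine ⟨m * n, ?_⟩
    rw [div_eq_iff hBc.ne']
    push_cast
    linear_combination (m : ℝ) * hm' - (m : ℝ) * hn' - D.B y y * hmm1

/-- `d_α = Bd(α∨,α∨)` is an integer for every root, given the dual normalization. -/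
lemma d_int (hnormVd : D.NormalizedDual) {c : V} (hc : c ∈ D.roots) :
    ∃ n : ℤ, D.Bd (D.coroot c) (D.coroot c) = (n : ℝ) := by
  classical
  -- choose a short coroot in the component of `c`
  set S := D.roots.filter (fun γ => D.SameComponent c γ) with hS
  have hcS : c ∈ S := by
    simp only [hS, Finset.mem_filter]
    exact ⟨hc, Relation.ReflTransGen.refl⟩
  obtain ⟨a, haS, hamin⟩ := Finset.exists_min_image S
    (fun γ => D.Bd (D.coroot γ) (D.coroot γ)) ⟨c, hcS⟩
  simp only [hS, Finset.mem_filter] at haS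
  obtain ⟨ha, hca⟩ := haS
  have hshort : D.ShortCoroot a := by
    refine ⟨ha, fun γ hγ hcomp => ?_⟩
    refine hamin γ ?_
    simp only [hS, Finset.mem_filter]
    exact ⟨hγ, hca.trans hcomp⟩
  have hda : D.Bd (D.coroot a) (D.coroot a) = 1 := hnormVd a hshort
  have hdc1 : (1 : ℝ) ≤ D.Bd (D.coroot c) (D.coroot c) := by
    have := hamin c hcS
    rw [hda] at this
    exact this
  -- constancy of d ⬝ B on the component
  have hconst := dB_const D hc hca
  rw [hda, one_mul] at hconst
  have hBc := B_root_pos D hc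
  have hBa := B_root_pos D ha
  have hge : D.B c c ≤ D.B a a := by
    by_contra hlt
    push_neg at hlt
    have : D.Bd (D.coroot c) (D.coroot c) < 1 := by
      rw [← (div_eq_iff hBc.ne').mpr hconst.symm] at *
      rw [div_lt_one hBc]
      exact hlt
    linarith
  -- find a root of the same length as `a` connected to `c`
  obtain ⟨y, hyroots, hyy, hyc⟩ := exists_connector D ha (sameComponent_symm D hca) hc
  obtain ⟨n, hn⟩ := ratio_int D hyroots hc hyc (by rw [hyy]; exact hge)
  refine ⟨n, ?_⟩
  rw [← hn, hyy, eq_div_iff hBc.ne', hconst]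

/-- a coweight takes integer values on the root lattice. -/
lemma coweight_int {x : Module.Dual ℝ V} (hx : x ∈ D.coweightLattice)
    {v : V} (hv : v ∈ D.rootLattice) : ∃ n : ℤ, x v = (n : ℝ) := by
  induction hv using AddSubgroup.closure_induction with
  | mem a ha => exact hx a ha
  | zero => exact ⟨0, by simp⟩
  | add a b _ _ iha ihb =>
    obtain ⟨p, hp⟩ := iha
    obtain ⟨q, hq⟩ := ihb
    exact ⟨p + q, by rw [map_add, hp, hq]; push_cast; ring⟩
  | neg a _ iha =>
    obtain ⟨p, hp⟩ := iha
    exact ⟨-p, by rw [map_neg, hp]; push_cast; ring⟩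

section Basis

variable [FiniteDimensional ℝ V]

/-- any vector decomposes along the fundamental weights with coefficients the
simple-coroot pairings. -/
lemma decomp (Pi : Finset V)
    (hlin : LinearIndependent ℝ (fun a : {x // x ∈ Pi} => (a : V)))
    (hspan : Submodule.span ℝ (Pi : Set V) = ⊤)
    (fw : V → V)
    (hfw : ∀ α ∈ Pi, ∀ β ∈ Pi, D.coroot β (fw α) = if α = β then 1 else 0)
    (v : V) : v = ∑ α ∈ Pi, D.coroot α v • fw α := by
  classical
  set E : V →ₗ[ℝ] ({x // x ∈ Pi} → ℝ) := LinearMap.pi (fun a => D.coroot (a : V)) with hE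
  have hEfw : ∀ (a : {x // x ∈ Pi}) (b : {x // x ∈ Pi}),
      E (fw (a : V)) b = if (a : V) = (b : V) then 1 else 0 := by
    intro a b
    simp only [hE, LinearMap.pi_apply]
    exact hfw _ a.2 _ b.2
  have hsurj : Function.Surjective E := by
    intro f
    refine ⟨∑ a : {x // x ∈ Pi}, f a • fw (a : V), ?_⟩
    funext b
    rw [map_sum]
    simp only [Finset.sum_apply]
    have : ∀ a : {x // x ∈ Pi}, E (f a • fw (a : V)) b
        = if a = b then f a else 0 := by
      intro a
      rw [map_smul]
      simp only [_root_.Pi.smul_apply, smul_eq_mul, hEfw a b]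
      by_cases hab : a = b
      · simp [hab]
      · have : ¬ ((a : V) = (b : V)) := fun h => hab (Subtype.ext h)
        simp [hab, this]
    rw [Finset.sum_congr rfl (fun a _ => this a), Finset.sum_ite_eq' Finset.univ b f]
    simp
  have hbasis : Basis {x // x ∈ Pi} ℝ V := Basis.mk hlin (by
    have hr : Set.range (fun a : {x // x ∈ Pi} => (a : V)) = (Pi : Set V) :=
      Subtype.range_coe
    rw [hr, hspan])
  have hrank : Module.finrank ℝ V = Module.finrank ℝ ({x // x ∈ Pi} → ℝ) := by
    rw [Module.finrank_eq_card_basis hbasis, Module.finrank_fintype_fun_eq_card]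
  have hinj : Function.Injective E :=
    (LinearMap.injective_iff_surjective_of_finrank_eq_finrank hrank).mpr hsurj
  apply hinj
  funext b
  rw [map_sum]
  simp only [Finset.sum_apply]
  have hb : ∀ a ∈ Pi, E (D.coroot a v • fw a) b
      = if a = (b : V) then D.coroot a v else 0 := by
    intro a ha
    rw [map_smul]
    have := hEfw ⟨a, ha⟩ b
    simp only [_root_.Pi.smul_apply, smul_eq_mul]
    rw [this]
    by_cases hab : a = (b : V)
    · simp [hab]
    · simp [hab]
  rw [Finset.sum_congr rfl hb, Finset.sum_ite_eq' Pi (b : V) (fun a => D.coroot a v)]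
  simp only [b.2, if_true]
  simp only [hE, LinearMap.pi_apply]

/-- injectivity: vectors agreeing against all simple coroots are equal. -/
lemma coroot_inj (Pi : Finset V)
    (hlin : LinearIndependent ℝ (fun a : {x // x ∈ Pi} => (a : V)))
    (hspan : Submodule.span ℝ (Pi : Set V) = ⊤)
    (fw : V → V)
    (hfw : ∀ α ∈ Pi, ∀ β ∈ Pi, D.coroot β (fw α) = if α = β then 1 else 0)
    {v w : V} (h : ∀ γ ∈ Pi, D.coroot γ v = D.coroot γ w) : v = w := by
  rw [decomp D Pi hlin hspan fw hfw v, decomp D Pi hlin hspan fw hfw w]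
  exact Finset.sum_congr rfl (fun γ hγ => by rw [h γ hγ])

end Basis

end Stmt15Aux

/-- With `Π_r = {α ∈ Π : f_α ∈ Λ_r}`, `Π' = Π \ Π_r`,
`s : Λ_w∨ → Λ'_w∨`, `s(x) = x − Σ_{β ∈ Π_r} ⟨x, f_β⟩ β∨`, and
`t : Λ'_w → Λ_w`, `t(f'_α) = d_α f_α` for `α ∈ Π'`, the image of
`t ∘ φ' ∘ s − φ` is contained in the root lattice `Λ_r`.  Here
`(t ∘ φ' ∘ s)(x) = Σ_{α ∈ Π'} ⟨s(x), α⟩ · d_α · f_α`, since `R'` is simply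
laced and `φ'(f'_α∨) = f'_α`. -/
theorem stmt15 {V : Type} [AddCommGroup V] [Module ℝ V] [FiniteDimensional ℝ V]
    (D : RootSystemData V)
    (hnormV : D.NormalizedPrimal) (hnormVd : D.NormalizedDual)
    (φ : Module.Dual ℝ V →ₗ[ℝ] V)
    (hφ : ∀ x y : Module.Dual ℝ V, x (φ y) = 2 * D.Bd x y)
    -- a system of simple roots `Π`
    (Pi : Finset V) (hPi : ∀ α ∈ Pi, α ∈ D.roots)
    (hlin : LinearIndependent ℝ (fun a : {x // x ∈ Pi} => (a : V)))
    (hspan : Submodule.span ℝ (Pi : Set V) = ⊤)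
    (hgen : ∀ α ∈ D.roots, α ∈ AddSubgroup.closure (Pi : Set V))
    -- the fundamental weights of `R`
    (fw : V → V)
    (hfw : ∀ α ∈ Pi, ∀ β ∈ Pi, D.coroot β (fw α) = if α = β then 1 else 0) :
    ∀ x ∈ D.coweightLattice,
      (∑ α ∈ Pi.filter (fun α => fw α ∉ D.rootLattice),
          ((x - ∑ β ∈ Pi.filter (fun β => fw β ∈ D.rootLattice),
              x (fw β) • D.coroot β) α)
            • (D.Bd (D.coroot α) (D.coroot α) • fw α))
        - φ x ∈ D.rootLattice := by
  intro x hx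
  set Pr := Pi.filter (fun β => fw β ∈ D.rootLattice) with hPrdef
  set P' := Pi.filter (fun α => fw α ∉ D.rootLattice) with hP'def
  set sx := x - ∑ β ∈ Pr, x (fw β) • D.coroot β with hsxdef
  have hPrPi : ∀ β ∈ Pr, β ∈ Pi := fun β h => (Finset.mem_filter.mp h).1
  have hP'Pi : ∀ α ∈ P', α ∈ Pi := fun α h => (Finset.mem_filter.mp h).1
  set Z := ∑ β ∈ Pr, ((-(x (fw β) * D.Bd (D.coroot β) (D.coroot β))) • β
      + x (fw β) • (∑ γ ∈ Pr, (D.coroot β γ * D.Bd (D.coroot γ) (D.coroot γ)) • fw γ)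
      + (-(D.Bd (D.coroot β) (D.coroot β) * x β)) • fw β) with hZdef
  have hkey : (∑ α ∈ P', sx α • (D.Bd (D.coroot α) (D.coroot α) • fw α)) - φ x = Z := by
    apply Stmt15Aux.coroot_inj D Pi hlin hspan fw hfw
    intro γ₀ hγ₀
    have hγ₀r := hPi γ₀ hγ₀
    have hsx_apply : ∀ γ : V, sx γ = x γ - ∑ β ∈ Pr, x (fw β) * D.coroot β γ := by
      intro γ
      simp only [hsxdef, LinearMap.sub_apply, LinearMap.coe_sum, Finset.sum_apply,
        LinearMap.smul_apply, smul_eq_mul]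
    have hLHS : D.coroot γ₀ ((∑ α ∈ P', sx α • (D.Bd (D.coroot α) (D.coroot α) • fw α)) - φ x)
        = (if γ₀ ∈ P' then sx γ₀ * D.Bd (D.coroot γ₀) (D.coroot γ₀) else 0)
          - D.Bd (D.coroot γ₀) (D.coroot γ₀) * x γ₀ := by
      rw [map_sub, map_sum, Stmt15Aux.coroot_phi D φ hφ hγ₀r x]
      congr 1
      have hterm : ∀ α ∈ P', D.coroot γ₀ (sx α • (D.Bd (D.coroot α) (D.coroot α) • fw α))
          = if α = γ₀ then sx α * D.Bd (D.coroot α) (D.coroot α) else 0 := by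
        intro α hα
        rw [map_smul, map_smul, smul_eq_mul, smul_eq_mul, hfw α (hP'Pi α hα) γ₀ hγ₀]
        by_cases h : α = γ₀ <;> simp [h]
      rw [Finset.sum_congr rfl hterm, Finset.sum_ite_eq' P' γ₀]
    have hsym : ∀ β ∈ Pr, D.Bd (D.coroot β) (D.coroot β) * D.coroot γ₀ β
        = D.Bd (D.coroot γ₀) (D.coroot γ₀) * D.coroot β γ₀ :=
      fun β hβ => Stmt15Aux.d_coroot_symm D (hPi β (hPrPi β hβ)) hγ₀r
    have hinner : ∀ β : V, D.coroot γ₀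
          (∑ γ ∈ Pr, (D.coroot β γ * D.Bd (D.coroot γ) (D.coroot γ)) • fw γ)
        = if γ₀ ∈ Pr then D.coroot β γ₀ * D.Bd (D.coroot γ₀) (D.coroot γ₀) else 0 := by
      intro β
      rw [map_sum]
      have hterm : ∀ γ ∈ Pr, D.coroot γ₀ ((D.coroot β γ * D.Bd (D.coroot γ) (D.coroot γ)) • fw γ)
          = if γ = γ₀ then D.coroot β γ * D.Bd (D.coroot γ) (D.coroot γ) else 0 := by
        intro γ hγ
        rw [map_smul, smul_eq_mul, hfw γ (hPrPi γ hγ) γ₀ hγ₀]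
        by_cases h : γ = γ₀ <;> simp [h]
      rw [Finset.sum_congr rfl hterm, Finset.sum_ite_eq' Pr γ₀]
    have hZγ : D.coroot γ₀ Z = ∑ β ∈ Pr,
        (-(x (fw β) * D.Bd (D.coroot β) (D.coroot β)) * D.coroot γ₀ β
          + x (fw β) * (if γ₀ ∈ Pr then D.coroot β γ₀ * D.Bd (D.coroot γ₀) (D.coroot γ₀) else 0)
          + -(D.Bd (D.coroot β) (D.coroot β) * x β) * (if β = γ₀ then 1 else 0)) := by
      rw [hZdef, map_sum]
      apply Finset.sum_congr rfl
      intro β hβ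
      rw [map_add, map_add, map_smul, map_smul, map_smul, smul_eq_mul, smul_eq_mul,
        smul_eq_mul, hinner β, hfw β (hPrPi β hβ) γ₀ hγ₀]
    rw [hLHS, hZγ]
    by_cases hmem : γ₀ ∈ Pr
    · have hfwγ₀ : fw γ₀ ∈ D.rootLattice := (Finset.mem_filter.mp hmem).2
      have hnotP' : γ₀ ∉ P' := by
        intro h
        exact (Finset.mem_filter.mp h).2 hfwγ₀
      rw [if_neg hnotP']
      have hterm : ∀ β ∈ Pr,
          (-(x (fw β) * D.Bd (D.coroot β) (D.coroot β)) * D.coroot γ₀ β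
            + x (fw β) * (if γ₀ ∈ Pr then D.coroot β γ₀ * D.Bd (D.coroot γ₀) (D.coroot γ₀) else 0)
            + -(D.Bd (D.coroot β) (D.coroot β) * x β) * (if β = γ₀ then 1 else 0))
          = if β = γ₀ then -(D.Bd (D.coroot β) (D.coroot β) * x β) else 0 := by
        intro β hβ
        rw [if_pos hmem]
        by_cases h : β = γ₀
        · simp only [if_pos h]
          linear_combination -(x (fw β)) * (hsym β hβ)
        · simp only [if_neg h]
          linear_combination -(x (fw β)) * (hsym β hβ)
      rw [Finset.sum_congr rfl hterm, Finset.sum_ite_eq' Pr γ₀, if_pos hmem]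
      ring
    · have hP'mem : γ₀ ∈ P' := by
        rw [hP'def, Finset.mem_filter]
        refine ⟨hγ₀, fun h => hmem ?_⟩
        rw [hPrdef, Finset.mem_filter]
        exact ⟨hγ₀, h⟩
      rw [if_pos hP'mem, hsx_apply γ₀]
      have hterm : ∀ β ∈ Pr,
          (-(x (fw β) * D.Bd (D.coroot β) (D.coroot β)) * D.coroot γ₀ β
            + x (fw β) * (if γ₀ ∈ Pr then D.coroot β γ₀ * D.Bd (D.coroot γ₀) (D.coroot γ₀) else 0)
            + -(D.Bd (D.coroot β) (D.coroot β) * x β) * (if β = γ₀ then 1 else 0))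
          = -(x (fw β) * D.coroot β γ₀ * D.Bd (D.coroot γ₀) (D.coroot γ₀)) := by
        intro β hβ
        rw [if_neg hmem, if_neg (show ¬ β = γ₀ from fun h => hmem (h ▸ hβ))]
        linear_combination -(x (fw β)) * (hsym β hβ)
      rw [Finset.sum_congr rfl hterm]
      rw [show (∑ β ∈ Pr, -(x (fw β) * D.coroot β γ₀ * D.Bd (D.coroot γ₀) (D.coroot γ₀)))
          = -((∑ β ∈ Pr, x (fw β) * D.coroot β γ₀) * D.Bd (D.coroot γ₀) (D.coroot γ₀)) by
        rw [Finset.sum_mul, ← Finset.sum_neg_distrib]]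
      ring
  rw [hkey]
  rw [hZdef]
  apply AddSubgroup.sum_mem
  intro β hβ
  have hβPi := hPrPi β hβ
  have hβr := hPi β hβPi
  have hfwβ : fw β ∈ D.rootLattice := (Finset.mem_filter.mp hβ).2
  obtain ⟨k, hk⟩ := Stmt15Aux.coweight_int D hx hfwβ
  obtain ⟨d, hd⟩ := Stmt15Aux.d_int D hnormVd hβr
  refine AddSubgroup.add_mem _ (AddSubgroup.add_mem _ ?_ ?_) ?_
  · rw [hk, hd, show (-((k : ℝ) * (d : ℝ))) = (((-(k * d) : ℤ)) : ℝ) by push_cast; ring,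
      Int.cast_smul_eq_zsmul]
    exact AddSubgroup.zsmul_mem _ (AddSubgroup.subset_closure hβr) _
  · rw [hk, Int.cast_smul_eq_zsmul]
    apply AddSubgroup.zsmul_mem
    apply AddSubgroup.sum_mem
    intro γ hγ
    have hγr := hPi γ (hPrPi γ hγ)
    obtain ⟨mi, hmi⟩ := D.crystallographic β hβr γ hγr
    obtain ⟨dγ, hdγ⟩ := Stmt15Aux.d_int D hnormVd hγr
    rw [hmi, hdγ, show ((mi : ℝ) * (dγ : ℝ)) = (((mi * dγ : ℤ)) : ℝ) by push_cast; ring,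
      Int.cast_smul_eq_zsmul]
    exact AddSubgroup.zsmul_mem _ (Finset.mem_filter.mp hγ).2 _
  · obtain ⟨xb, hxb⟩ := hx β hβr
    rw [hd, hxb, show (-((d : ℝ) * (xb : ℝ))) = (((-(d * xb) : ℤ)) : ℝ) by push_cast; ring,
      Int.cast_smul_eq_zsmul]
    exact AddSubgroup.zsmul_mem _ hfwβ _
end
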